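/- Let 𝒳 be a non-trivial positive and coherent category which is well-pointed and filtral, and assume Sub(X) is an atomic lattice for every object X of 𝒳. Then the functor Spec : 𝒳 → KH restricts to an equivalence between the full subcategory of 𝒳 on the decidable objects and the category of finite sets and functions. -/

import Mathlib

open CategoryTheory CategoryTheory.Limits Opposite

universe w' w v u

namespace Paper

variable {C : Type u} [Category.{v} C]

/-- "X ≇ 0": the object `X` is not initial. -/
def NonInitial (X : C) : Prop := IsInitial X → False

/-- The category is non-trivial: `0 ≇ 1`, i.e. no object is both initial and terminal. -/
def NonTrivialCat (C : Type u) [Category.{v} C] : Prop :=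
  ∀ X : C, IsInitial X → IsTerminal X → False

section Terminal
variable (C) [HasTerminal C]

/-- The category is well-pointed: the functor of points `pt = Hom(1, -)` is faithful. -/
def WellPointed : Prop :=
  ∀ ⦃X Y : C⦄ (f g : X ⟶ Y), (∀ p : ⊤_ C ⟶ X, p ≫ f = p ≫ g) → f = g

/-- The unique morphism `X ⟶ 1` is a retraction for every `X ≇ 0`. -/
def EnoughPoints : Prop :=
  ∀ X : C, NonInitial X → Nonempty (SplitEpi (terminal.from X))

end Terminal

/-- `b` is the bottom element of `Sub(X)`. -/
def IsBotIn {X : C} (b : Subobject X) : Prop := ∀ S : Subobject X, b ≤ S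

/-- `S` is an atom of the subobject lattice `Sub(X)`. -/
def IsAtomIn {X : C} (S : Subobject X) : Prop :=
  ¬ IsBotIn S ∧ ∀ T : Subobject X, T < S → IsBotIn T

/-- `Sub(X)` is atomic: every subobject is the supremum of the atoms below it. -/
def AtomicSubobjects (X : C) : Prop :=
  ∀ S : Subobject X, IsLUB {A : Subobject X | IsAtomIn A ∧ A ≤ S} S

/-- `S` is a complemented subobject: it has a complement `T` with `S ⊓ T = ⊥`, `S ⊔ T = ⊤`. -/
def IsComplementedSub {X : C} (S : Subobject X) : Prop :=
  ∃ T m : Subobject X, IsGLB {S, T} m ∧ IsBotIn m ∧ IsLUB {S, T} ⊤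

/-- A (non-empty) filter of the Boolean center `B(X)` of `Sub(X)`. -/
structure CenterFilter (X : C) where
  carrier : Set (Subobject X)
  mem_complemented : ∀ S ∈ carrier, IsComplementedSub S
  nonempty : carrier.Nonempty
  inf_mem : ∀ S ∈ carrier, ∀ T ∈ carrier, ∀ m : Subobject X, IsGLB {S, T} m → m ∈ carrier
  mem_of_le : ∀ S ∈ carrier, ∀ T : Subobject X, IsComplementedSub T → S ≤ T → T ∈ carrier

theorem CenterFilter.ext' {X : C} {F G : CenterFilter X} (h : F.carrier = G.carrier) : F = G := by
  cases F; cases G; cases h; rfl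

/-- Filters of the Boolean center, ordered by reverse inclusion. -/
instance (X : C) : PartialOrder (CenterFilter X) where
  le F G := G.carrier ⊆ F.carrier
  le_refl _ := subset_rfl
  le_trans _ _ _ h1 h2 := fun _ hx => h1 (h2 hx)
  le_antisymm _ _ h1 h2 := CenterFilter.ext' (Set.Subset.antisymm h2 h1)

/-- An object `X` is filtral if `Sub(X)` is isomorphic, as a lattice, to the lattice of
non-empty filters of the Boolean center of `Sub(X)`. -/
def FiltralObject (X : C) : Prop :=
  Nonempty (Subobject X ≃o CenterFilter X)

/-- A category is filtral if every object is covered by a filtral one. -/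
def Filtral (C : Type u) [Category.{v} C] : Prop :=
  ∀ Y : C, ∃ (X : C) (f : X ⟶ Y), Nonempty (RegularEpi f) ∧ FiltralObject X

/-- `Sub(X)` is a complete lattice (every subset has an infimum). -/
def MonoCompleteAt (X : C) : Prop :=
  ∀ s : Set (Subobject X), ∃ m : Subobject X, IsGLB s m

/-- The category is mono-complete: every subobject poset is a complete lattice. -/
def MonoComplete (C : Type u) [Category.{v} C] : Prop := ∀ X : C, MonoCompleteAt X

section Points
variable [HasTerminal C]

/-- `Vs S` is the set of points of `X` factoring through the subobject `S`. -/
def Vs {X : C} (S : Subobject X) : Set (⊤_ C ⟶ X) := {p | S.Factors p}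

open Classical in
/-- `Cg T` is the smallest subobject of `X` through which every point in `T` factors
(defined whenever the relevant infimum exists). -/
noncomputable def Cg {X : C} (T : Set (⊤_ C ⟶ X)) : Subobject X :=
  if h : ∃ m : Subobject X, IsGLB {S : Subobject X | ∀ p ∈ T, S.Factors p} m
  then h.choose else ⊤

/-- The closure operator `cl = Vs ∘ Cg` on the power set of `pt X`. -/
noncomputable def cl {X : C} (T : Set (⊤_ C ⟶ X)) : Set (⊤_ C ⟶ X) := Vs (Cg T)

end Points

/-- Images are stable under pullback (together with finite limits and images, this is
the definition of a regular category). -/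
class StableImages (C : Type u) [Category.{v} C] [HasFiniteLimits C] [HasImages C] : Prop where
  image_pullback : ∀ {X Y Z : C} (f : X ⟶ Y) (g : Z ⟶ Y),
    (Subobject.pullback g).obj (imageSubobject f) = imageSubobject (pullback.snd f g)

/-- The extra structure of a coherent category: each `Sub(X)` has finite joins and these
are preserved by the pullback functors. -/
class CoherentJoins (C : Type u) [Category.{v} C] [HasPullbacks C] : Prop where
  exists_bot : ∀ X : C, ∃ b : Subobject X, IsBotIn b
  exists_sup : ∀ {X : C} (S T : Subobject X), ∃ U : Subobject X, IsLUB {S, T} U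
  pullback_bot : ∀ {X Y : C} (f : X ⟶ Y) (b : Subobject Y),
    IsBotIn b → IsBotIn ((Subobject.pullback f).obj b)
  pullback_sup : ∀ {X Y : C} (f : X ⟶ Y) (S T U : Subobject Y), IsLUB {S, T} U →
    IsLUB {(Subobject.pullback f).obj S, (Subobject.pullback f).obj T}
      ((Subobject.pullback f).obj U)

/-- An internal equivalence relation: a jointly-monic pair which is reflexive, symmetric and
transitive (expressed via generalised elements). -/
structure IsEquivRelPair {R X : C} (r₁ r₂ : R ⟶ X) : Prop where
  jointlyMono : ∀ {Z : C} (a b : Z ⟶ R), a ≫ r₁ = b ≫ r₁ → a ≫ r₂ = b ≫ r₂ → a = b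
  refl : ∀ {Z : C} (a : Z ⟶ X), ∃ h : Z ⟶ R, h ≫ r₁ = a ∧ h ≫ r₂ = a
  symm : ∀ {Z : C} (a b : Z ⟶ X), (∃ h : Z ⟶ R, h ≫ r₁ = a ∧ h ≫ r₂ = b) →
    ∃ h : Z ⟶ R, h ≫ r₁ = b ∧ h ≫ r₂ = a
  trans : ∀ {Z : C} (a b c : Z ⟶ X), (∃ h : Z ⟶ R, h ≫ r₁ = a ∧ h ≫ r₂ = b) →
    (∃ h : Z ⟶ R, h ≫ r₁ = b ∧ h ≫ r₂ = c) →
    ∃ h : Z ⟶ R, h ≫ r₁ = a ∧ h ≫ r₂ = c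

/-- Every internal equivalence relation is effective: it is the kernel pair of its
coequaliser. -/
def EffectiveEquivRels (C : Type u) [Category.{v} C] : Prop :=
  ∀ {R X : C} (r₁ r₂ : R ⟶ X), IsEquivRelPair r₁ r₂ →
    ∃ (Y : C) (q : X ⟶ Y) (w : r₁ ≫ q = r₂ ≫ q),
      Nonempty (IsColimit (Cofork.ofπ q w)) ∧ Nonempty (IsLimit (PullbackCone.mk r₁ r₂ w))

/-- An object is decidable if its diagonal is a complemented subobject of `X ⨯ X`. -/
def DecidableObj [HasBinaryProducts C] (X : C) : Prop :=
  ∃ (Y : C) (g : Y ⟶ X ⨯ X), Nonempty (IsColimit (BinaryCofan.mk (diag X) g))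

/-- An object is pro-decidable if it is a codirected (cofiltered) limit of decidable objects. -/
def ProDecidableObj [HasBinaryProducts C] (X : C) : Prop :=
  ∃ (J : Type v) (_ : SmallCategory J) (_ : IsCofiltered J) (D : J ⥤ C) (c : Cone D),
    (∀ j, DecidableObj (D.obj j)) ∧ Nonempty (IsLimit c) ∧ Nonempty (c.pt ≅ X)


-- ======================== auxiliary development ========================
set_option linter.unusedSectionVars false
set_option linter.unusedVariables false

section Aux

variable [WellPowered.{v} C] [HasFiniteLimits C] [HasFiniteCoproducts C] [BinaryCoproductsDisjoint C]

instance : InitialMonoClass C := initialMonoClass_of_coproductsDisjoint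

lemma hom_terminal_ext {A : C} (f g : A ⟶ ⊤_ C) : f = g := by
  apply terminal.hom_ext

lemma no_point_of_isInitial (hnt : NonTrivialCat C) {Z : C} (hZ : IsInitial Z)
    (f : ⊤_ C ⟶ Z) : False := by
  refine hnt (⊤_ C) (hZ.ofIso ?_) terminalIsTerminal
  exact ⟨terminal.from Z, f, hZ.hom_ext _ _, hom_terminal_ext _ _⟩

noncomputable def isInitialOfHomToInitial (hnt : NonTrivialCat C) (hwp : WellPointed C)
    {A Z : C} (hZ : IsInitial Z) (f : A ⟶ Z) : IsInitial A :=
  IsInitial.ofUniqueHom (fun B => f ≫ hZ.to B) (fun B m =>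
    hwp _ _ fun p => (no_point_of_isInitial hnt hZ (p ≫ f)).elim)

lemma exists_point (hnt : NonTrivialCat C) (hwp : WellPointed C)
    {A : C} (h : IsInitial A → False) : Nonempty (⊤_ C ⟶ A) := by
  by_contra hn
  apply h
  have hno : ∀ p : ⊤_ C ⟶ A, False := fun p => hn ⟨p⟩
  have heq : (coprod.inl : A ⟶ A ⨿ A) = coprod.inr :=
    hwp _ _ fun p => (hno p).elim
  refine IsInitial.ofBinaryCoproductDisjointOfIsLimit
    (PullbackCone.mk (𝟙 A) (𝟙 A) (by rw [heq])) ?_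
  -- limit cone over (inl, inr) with both legs 𝟙
  refine PullbackCone.IsLimit.mk _ (fun s => s.fst) (fun s => Category.comp_id _)
    (fun s => ?_) (fun s m h₁ _ => by simpa using h₁)
  have : s.fst ≫ (coprod.inl : A ⟶ A ⨿ A) = s.snd ≫ coprod.inl := by
    rw [s.condition]
    exact congrArg (CategoryStruct.comp s.snd) heq.symm
  simpa using (cancel_mono (coprod.inl : A ⟶ A ⨿ A)).mp this

instance point_isSplitMono {X : C} (p : ⊤_ C ⟶ X) : IsSplitMono p :=
  IsSplitMono.mk' ⟨terminal.from X, hom_terminal_ext _ _⟩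

lemma factors_iff_mk_le {X A : C} (S : Subobject X) (f : A ⟶ X) [Mono f] :
    S.Factors f ↔ Subobject.mk f ≤ S := by
  constructor
  · intro h
    have := Subobject.factorThru_arrow S f h
    calc Subobject.mk f ≤ Subobject.mk S.arrow :=
          Subobject.mk_le_mk_of_comm (S.factorThru f h) this
      _ = S := Subobject.mk_arrow S
  · intro h
    rw [Subobject.factors_iff]
    exact ⟨(Subobject.underlyingIso f).inv ≫ Subobject.ofLE _ _ h, by simp⟩

lemma vs_mono {X : C} {S T : Subobject X} (h : S ≤ T) : Vs S ⊆ Vs T := by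
  intro p hp
  haveI := point_isSplitMono p
  simp only [Vs, Set.mem_setOf_eq, factors_iff_mk_le] at hp ⊢
  exact hp.trans h

lemma vs_bot (hnt : NonTrivialCat C) {X : C} : Vs (⊥ : Subobject X) = ∅ := by
  ext p
  simp only [Set.mem_empty_iff_false, iff_false, Vs, Set.mem_setOf_eq]
  intro h
  exact no_point_of_isInitial hnt initialIsInitial
    (((⊥ : Subobject X).factorThru p h) ≫ (Subobject.botCoeIsoInitial).hom)

lemma isBotIn_iff {X : C} (S : Subobject X) : IsBotIn S ↔ S = ⊥ :=
  ⟨fun h => le_antisymm (h ⊥) bot_le, fun h S' => h ▸ bot_le⟩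

lemma exists_point_of_ne_bot (hnt : NonTrivialCat C) (hwp : WellPointed C)
    {X : C} {S : Subobject X} (h : S ≠ ⊥) : (Vs S).Nonempty := by
  have hni : IsInitial (S : C) → False := by
    intro hS
    apply h
    have : Subobject.mk S.arrow ≤ Subobject.mk (initial.to X) :=
      Subobject.mk_le_mk_of_comm (hS.to (⊥_ C)) (hS.hom_ext _ _)
    rw [Subobject.mk_arrow, ← Subobject.bot_eq_initial_to] at this
    exact le_bot_iff.mp this
  obtain ⟨u⟩ := exists_point hnt hwp hni
  exact ⟨u ≫ S.arrow, Subobject.factors_comp_arrow u⟩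

lemma vs_ne_empty_iff (hnt : NonTrivialCat C) (hwp : WellPointed C)
    {X : C} (S : Subobject X) : (Vs S).Nonempty ↔ S ≠ ⊥ := by
  constructor
  · rintro ⟨p, hp⟩ rfl
    rw [vs_bot hnt] at hp
    exact hp
  · exact exists_point_of_ne_bot hnt hwp


lemma point_eq_of_mk_factors (hnt : NonTrivialCat C) {X : C} {p q : ⊤_ C ⟶ X}
    (h : (Subobject.mk p).Factors q) : q = p := by
  rw [Subobject.mk_factors_iff] at h
  obtain ⟨u, hu⟩ := h
  rw [MonoOver.mk_arrow] at hu
  rw [← hu, hom_terminal_ext u (𝟙 _)]; exact Category.id_comp _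

lemma mk_point_ne_bot (hnt : NonTrivialCat C) {X : C} (p : ⊤_ C ⟶ X) :
    (Subobject.mk p) ≠ ⊥ := by
  intro h
  have : p ∈ Vs (⊥ : Subobject X) := h ▸ Subobject.mk_factors_self p
  rw [vs_bot hnt] at this
  exact this

lemma isAtomIn_iff_point (hnt : NonTrivialCat C) (hwp : WellPointed C)
    {X : C} (A : Subobject X) :
    IsAtomIn A ↔ ∃ p : ⊤_ C ⟶ X, A = Subobject.mk p := by
  constructor
  · rintro ⟨hA, hmin⟩
    rw [isBotIn_iff] at hA
    obtain ⟨p, hp⟩ := exists_point_of_ne_bot hnt hwp hA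
    have hle : Subobject.mk p ≤ A := (factors_iff_mk_le A p).mp hp
    rcases lt_or_eq_of_le hle with hlt | heq
    · exact absurd ((isBotIn_iff _).mp (hmin _ hlt)) (mk_point_ne_bot hnt p)
    · exact ⟨p, heq.symm⟩
  · rintro ⟨p, rfl⟩
    refine ⟨fun h => mk_point_ne_bot hnt p ((isBotIn_iff _).mp h), fun T hT => ?_⟩
    rw [isBotIn_iff]
    by_contra hne
    obtain ⟨q, hq⟩ := exists_point_of_ne_bot hnt hwp hne
    have hq' : (Subobject.mk p).Factors q :=
      vs_mono hT.le hq
    have := point_eq_of_mk_factors hnt hq'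
    subst this
    exact absurd (lt_of_le_of_lt ((factors_iff_mk_le T q).mp hq) hT) (lt_irrefl _)

lemma le_iff_vs_subset (hnt : NonTrivialCat C) (hwp : WellPointed C)
    (hat : ∀ X : C, AtomicSubobjects X) {X : C} (S T : Subobject X) :
    S ≤ T ↔ Vs S ⊆ Vs T := by
  constructor
  · exact vs_mono
  · intro h
    refine (hat X S).2 fun A hA => ?_
    obtain ⟨p, rfl⟩ := (isAtomIn_iff_point hnt hwp A).mp hA.1
    refine (factors_iff_mk_le T p).mp (h ?_)
    exact (factors_iff_mk_le S p).mpr hA.2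

lemma vs_top {X : C} : Vs (⊤ : Subobject X) = Set.univ := by
  ext p; simp [Vs, Subobject.top_factors]

lemma eq_top_of_vs_univ (hnt : NonTrivialCat C) (hwp : WellPointed C)
    (hat : ∀ X : C, AtomicSubobjects X) {X : C} {S : Subobject X}
    (h : Vs S = Set.univ) : S = ⊤ := by
  refine top_le_iff.mp ?_
  rw [le_iff_vs_subset hnt hwp hat, h, vs_top]

lemma eq_top_of_factors_id {X : C} {S : Subobject X} (h : S.Factors (𝟙 X)) : S = ⊤ := by
  haveI : IsSplitEpi S.arrow :=
    IsSplitEpi.mk' ⟨S.factorThru (𝟙 X) h, Subobject.factorThru_arrow _ _ _⟩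
  haveI : IsIso S.arrow := isIso_of_mono_of_isSplitEpi _
  exact Subobject.eq_top_of_isIso_arrow S

lemma pullback_factors_iff {Z X W : C} (f : Z ⟶ X) (S : Subobject X) (g : W ⟶ Z) :
    ((Subobject.pullback f).obj S).Factors g ↔ S.Factors (g ≫ f) := by
  induction S using Subobject.ind with
  | h m =>
    have heq : (Subobject.pullback f).obj (Subobject.mk m) =
        Subobject.mk (pullback.snd m f) := rfl
    rw [heq]
    rw [Subobject.mk_factors_iff, Subobject.mk_factors_iff]
    constructor
    · rintro ⟨u, hu⟩
      rw [MonoOver.mk_arrow] at hu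
      exact ⟨u ≫ pullback.fst m f, by rw [MonoOver.mk_arrow]; erw [Category.assoc,
        pullback.condition, ← Category.assoc, hu]⟩
    · rintro ⟨v, hv⟩
      rw [MonoOver.mk_arrow] at hv
      refine ⟨pullback.lift v g hv, ?_⟩
      rw [MonoOver.mk_arrow]
      exact pullback.lift_snd _ _ _

lemma vs_isGLB {X : C} {S T m : Subobject X} (h : IsGLB {S, T} m) :
    Vs m = Vs S ∩ Vs T := by
  apply subset_antisymm
  · exact Set.subset_inter (vs_mono (h.1 (Set.mem_insert _ _)))
      (vs_mono (h.1 (Set.mem_insert_of_mem _ rfl)))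
  · rintro p ⟨hS, hT⟩
    show m.Factors p
    rw [factors_iff_mk_le]
    refine h.2 fun U hU => ?_
    rcases hU with rfl | hU
    · exact (factors_iff_mk_le _ p).mp hS
    · rw [Set.mem_singleton_iff] at hU; subst hU
      exact (factors_iff_mk_le _ p).mp hT

lemma subobject_terminal_eq_bot_or_top (hnt : NonTrivialCat C) (hwp : WellPointed C)
    (S : Subobject (⊤_ C)) : S = ⊥ ∨ S = ⊤ := by
  by_cases h : S = ⊥
  · exact Or.inl h
  · obtain ⟨p, hp⟩ := exists_point_of_ne_bot hnt hwp h
    right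
    rw [hom_terminal_ext p (𝟙 _)] at hp
    exact eq_top_of_factors_id hp

lemma bot_ne_top_terminal (hnt : NonTrivialCat C) :
    (⊥ : Subobject (⊤_ C)) ≠ ⊤ := by
  intro h
  have : (𝟙 (⊤_ C)) ∈ Vs (⊥ : Subobject (⊤_ C)) := by
    rw [h, vs_top]; trivial
  rw [vs_bot hnt] at this
  exact this

variable [CoherentJoins C]

lemma factors_of_isLUB (hnt : NonTrivialCat C) (hwp : WellPointed C)
    {X : C} {S T U : Subobject X} (h : IsLUB {S, T} U) (p : ⊤_ C ⟶ X)
    (hp : U.Factors p) : S.Factors p ∨ T.Factors p := by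
  have hpb := CoherentJoins.pullback_sup p S T U h
  have hU : (Subobject.pullback p).obj U = ⊤ := by
    apply eq_top_of_factors_id
    rw [pullback_factors_iff, Category.id_comp]
    exact hp
  have case : ∀ V : Subobject X, (Subobject.pullback p).obj V = ⊤ → V.Factors p := by
    intro V hV
    have : ((Subobject.pullback p).obj V).Factors (𝟙 _) := hV ▸ Subobject.top_factors _
    rw [pullback_factors_iff, Category.id_comp] at this
    exact this
  rcases subobject_terminal_eq_bot_or_top hnt hwp ((Subobject.pullback p).obj S) with hS | hS
  · rcases subobject_terminal_eq_bot_or_top hnt hwp ((Subobject.pullback p).obj T) with hT | hT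
    · exfalso
      rw [hS, hT, hU] at hpb
      have : (⊤ : Subobject (⊤_ C)) ≤ ⊥ := hpb.2 (by
        intro V hV
        rcases hV with rfl | hV
        · exact le_refl _
        · rw [Set.mem_singleton_iff] at hV; subst hV; exact le_refl _)
      exact bot_ne_top_terminal hnt (le_antisymm bot_le this)
    · exact Or.inr (case T hT)
  · exact Or.inl (case S hS)

lemma vs_isLUB (hnt : NonTrivialCat C) (hwp : WellPointed C)
    {X : C} {S T U : Subobject X} (h : IsLUB {S, T} U) :
    Vs U = Vs S ∪ Vs T := by
  apply subset_antisymm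
  · intro p hp
    exact factors_of_isLUB hnt hwp h p hp
  · refine Set.union_subset (vs_mono (h.1 (Set.mem_insert _ _)))
      (vs_mono (h.1 (Set.mem_insert_of_mem _ rfl)))


section Cofan

variable {A B Z : C}

lemma isLUB_mk_top_of_isColimit {m₁ : A ⟶ Z} {m₂ : B ⟶ Z} [Mono m₁] [Mono m₂]
    (c : IsColimit (BinaryCofan.mk m₁ m₂)) :
    IsLUB {Subobject.mk m₁, Subobject.mk m₂} (⊤ : Subobject Z) := by
  constructor
  · rintro U (rfl | hU) <;> [exact le_top; exact le_top]
  · intro U hU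
    have h₁ : U.Factors m₁ := (factors_iff_mk_le U m₁).mpr (hU (Set.mem_insert _ _))
    have h₂ : U.Factors m₂ := (factors_iff_mk_le U m₂).mpr (hU (Set.mem_insert_of_mem _ rfl))
    have hd : (c.desc (BinaryCofan.mk (U.factorThru m₁ h₁) (U.factorThru m₂ h₂))) ≫ U.arrow
        = 𝟙 Z := by
      refine c.hom_ext fun j => ?_
      have l := c.fac (BinaryCofan.mk (U.factorThru m₁ h₁) (U.factorThru m₂ h₂)) j
      rcases j with ⟨_ | _⟩ <;> simp only [BinaryCofan.mk_pt, pair_obj_left, pair_obj_right,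
        BinaryCofan.ι_app_left, BinaryCofan.ι_app_right, BinaryCofan.mk_inl, BinaryCofan.mk_inr,
        Category.comp_id] at l ⊢ <;>
        erw [← Category.assoc, l, Subobject.factorThru_arrow] <;> exact (Category.comp_id _).symm
    have htop : U = ⊤ := eq_top_of_factors_id (by
      rw [Subobject.factors_iff]
      exact ⟨c.desc (BinaryCofan.mk (U.factorThru m₁ h₁) (U.factorThru m₂ h₂)), hd⟩)
    exact htop.ge

lemma point_in_cofan (hnt : NonTrivialCat C) (hwp : WellPointed C)
    {m₁ : A ⟶ Z} {m₂ : B ⟶ Z} [Mono m₁] [Mono m₂]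
    (c : IsColimit (BinaryCofan.mk m₁ m₂)) (p : ⊤_ C ⟶ Z) :
    (∃ a : ⊤_ C ⟶ A, a ≫ m₁ = p) ∨ (∃ b : ⊤_ C ⟶ B, b ≫ m₂ = p) := by
  have := factors_of_isLUB hnt hwp (isLUB_mk_top_of_isColimit c) p (Subobject.top_factors p)
  rcases this with h | h
  · left
    rw [Subobject.mk_factors_iff] at h
    obtain ⟨u, hu⟩ := h
    rw [MonoOver.mk_arrow] at hu
    exact ⟨u, hu⟩
  · right
    rw [Subobject.mk_factors_iff] at h
    obtain ⟨u, hu⟩ := h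
    rw [MonoOver.mk_arrow] at hu
    exact ⟨u, hu⟩

lemma no_common_point (hnt : NonTrivialCat C)
    {m₁ : A ⟶ Z} {m₂ : B ⟶ Z}
    (c : IsColimit (BinaryCofan.mk m₁ m₂)) (a : ⊤_ C ⟶ A) (b : ⊤_ C ⟶ B) :
    a ≫ m₁ ≠ b ≫ m₂ := by
  intro h
  haveI : BinaryCoproductDisjoint A B := inferInstance
  have hini : IsInitial (pullback m₁ m₂) := IsInitial.ofBinaryCoproductDisjointOfIsColimit c
  exact no_point_of_isInitial hnt hini (pullback.lift a b h)

lemma isColimit_cofan_of_points (hnt : NonTrivialCat C) (hwp : WellPointed C)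
    (hat : ∀ X : C, AtomicSubobjects X)
    (m₁ : A ⟶ Z) (m₂ : B ⟶ Z) [Mono m₁] [Mono m₂]
    (hdisj : ∀ (a : ⊤_ C ⟶ A) (b : ⊤_ C ⟶ B), a ≫ m₁ ≠ b ≫ m₂)
    (hcover : ∀ z : ⊤_ C ⟶ Z, (∃ a, a ≫ m₁ = z) ∨ (∃ b, b ≫ m₂ = z)) :
    Nonempty (IsColimit (BinaryCofan.mk m₁ m₂)) := by
  set k : A ⨿ B ⟶ Z := coprod.desc m₁ m₂ with hk
  haveI hmono : Mono k := by
    constructor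
    intro W u v huv
    refine hwp _ _ fun π => ?_
    have hx := point_in_cofan hnt hwp (coprodIsCoprod A B) (π ≫ u)
    have hy := point_in_cofan hnt hwp (coprodIsCoprod A B) (π ≫ v)
    have hxy : (π ≫ u) ≫ k = (π ≫ v) ≫ k := by
      rw [Category.assoc, Category.assoc, huv]
    rcases hx with ⟨a, ha⟩ | ⟨a, ha⟩ <;> rcases hy with ⟨b, hb⟩ | ⟨b, hb⟩
    · rw [← ha, ← hb, Category.assoc, Category.assoc, coprod.inl_desc] at hxy
      have hab : a = b := (cancel_mono m₁).mp hxy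
      rw [← ha, ← hb, hab]
    · exfalso
      rw [← ha, ← hb, Category.assoc, Category.assoc, coprod.inl_desc, coprod.inr_desc] at hxy
      exact hdisj a b hxy
    · exfalso
      rw [← ha, ← hb, Category.assoc, Category.assoc, coprod.inl_desc, coprod.inr_desc] at hxy
      exact hdisj b a hxy.symm
    · rw [← ha, ← hb, Category.assoc, Category.assoc, coprod.inr_desc] at hxy
      have hab : a = b := (cancel_mono m₂).mp hxy
      rw [← ha, ← hb, hab]
  have htop : Subobject.mk k = ⊤ := by
    apply eq_top_of_vs_univ hnt hwp hat
    rw [Set.eq_univ_iff_forall]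
    intro z
    show (Subobject.mk k).Factors z
    rw [Subobject.mk_factors_iff]
    rcases hcover z with ⟨a, ha⟩ | ⟨b, hb⟩
    · refine ⟨a ≫ coprod.inl, ?_⟩
      rw [MonoOver.mk_arrow]; erw [Category.assoc, coprod.inl_desc]
      exact ha
    · refine ⟨b ≫ coprod.inr, ?_⟩
      rw [MonoOver.mk_arrow]; erw [Category.assoc, coprod.inr_desc]
      exact hb
  haveI : IsIso k := (Subobject.isIso_iff_mk_eq_top k).mpr htop
  refine ⟨BinaryCofan.isColimitMk (fun s => inv k ≫ coprod.desc s.inl s.inr) ?_ ?_ ?_⟩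
  · intro s
    have h₁ : m₁ ≫ inv k = coprod.inl := by
      rw [← coprod.inl_desc m₁ m₂, ← hk, Category.assoc, IsIso.hom_inv_id, Category.comp_id]
    rw [← Category.assoc, h₁]; exact coprod.inl_desc _ _
  · intro s
    have h₂ : m₂ ≫ inv k = coprod.inr := by
      rw [← coprod.inr_desc m₁ m₂, ← hk, Category.assoc, IsIso.hom_inv_id, Category.comp_id]
    rw [← Category.assoc, h₂]; exact coprod.inr_desc _ _
  · intro s f h₁ h₂
    rw [IsIso.eq_inv_comp]
    refine coprod.hom_ext ?_ ?_
    · rw [← Category.assoc, coprod.inl_desc]; exact h₁.trans (coprod.inl_desc _ _).symm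
    · rw [← Category.assoc, coprod.inr_desc]; exact h₂.trans (coprod.inr_desc _ _).symm

end Cofan

section Copow

noncomputable def copow : ℕ → C
  | 0 => ⊥_ C
  | n + 1 => (⊤_ C) ⨿ copow n

noncomputable def copowPt : (n : ℕ) → Fin n → (⊤_ C ⟶ copow (C := C) n)
  | n + 1, i => Fin.cases coprod.inl (fun j => copowPt n j ≫ coprod.inr) i

@[simp] lemma copowPt_zero (n : ℕ) :
    copowPt (C := C) (n + 1) 0 = coprod.inl := rfl

@[simp] lemma copowPt_succ (n : ℕ) (j : Fin n) :
    copowPt (C := C) (n + 1) j.succ = copowPt n j ≫ coprod.inr := by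
  simp [copowPt]; rfl

lemma copowPt_injective (hnt : NonTrivialCat C) :
    ∀ (n : ℕ) (i j : Fin n), copowPt (C := C) n i = copowPt n j → i = j := by
  intro n
  induction n with
  | zero => exact fun i => i.elim0
  | succ n ih =>
    intro i j
    refine Fin.cases ?_ (fun i' => ?_) i <;> [skip; skip] <;>
      refine Fin.cases ?_ (fun j' => ?_) j
    · intro _; rfl
    · intro h
      rw [copowPt_zero, copowPt_succ] at h
      exact absurd h.symm (by
        have := no_common_point hnt (coprodIsCoprod (⊤_ C) (copow (C := C) n))
          (𝟙 (⊤_ C)) (copowPt n j')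
        rw [Category.id_comp] at this
        exact fun hh => this hh.symm)
    · intro h
      rw [copowPt_zero, copowPt_succ] at h
      exact absurd h (by
        have := no_common_point hnt (coprodIsCoprod (⊤_ C) (copow (C := C) n))
          (𝟙 (⊤_ C)) (copowPt n i')
        rw [Category.id_comp] at this
        exact fun hh => this hh.symm)
    · intro h
      rw [copowPt_succ, copowPt_succ] at h
      rw [ih _ _ ((cancel_mono coprod.inr).mp h)]

lemma copowPt_surjective (hnt : NonTrivialCat C) (hwp : WellPointed C) :
    ∀ (n : ℕ) (z : ⊤_ C ⟶ copow (C := C) n), ∃ i : Fin n, z = copowPt n i := by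
  intro n
  induction n with
  | zero => exact fun z => (no_point_of_isInitial hnt initialIsInitial z).elim
  | succ n ih =>
    intro z
    rcases point_in_cofan hnt hwp (coprodIsCoprod (⊤_ C) (copow (C := C) n)) z with
      ⟨a, ha⟩ | ⟨b, hb⟩
    · refine ⟨0, ?_⟩
      rw [copowPt_zero, ← ha, hom_terminal_ext a (𝟙 _), Category.id_comp]
    · obtain ⟨j, hj⟩ := ih b
      refine ⟨j.succ, ?_⟩
      rw [copowPt_succ, ← hb, hj]

noncomputable def copowDesc : (n : ℕ) → (Fin n → (⊤_ C ⟶ V)) → (copow (C := C) n ⟶ V)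
  | 0, _ => initial.to V
  | n + 1, v => coprod.desc (v 0) (copowDesc n (fun j => v j.succ))

@[simp] lemma copowDesc_succ {V : C} (n : ℕ) (v : Fin (n + 1) → (⊤_ C ⟶ V)) :
    copowDesc (n + 1) v = coprod.desc (v 0) (copowDesc n (fun j => v j.succ)) := rfl

@[simp] lemma copowPt_desc {V : C} (n : ℕ) (v : Fin n → (⊤_ C ⟶ V)) (i : Fin n) :
    copowPt n i ≫ copowDesc n v = v i := by
  induction n with
  | zero => exact i.elim0
  | succ n ih =>
    refine Fin.cases ?_ (fun j => ?_) i
    · rw [copowPt_zero]; exact coprod.inl_desc _ _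
    · rw [copowPt_succ]; erw [Category.assoc, copowDesc_succ, coprod.inr_desc, ih]

lemma copowDesc_mono (hnt : NonTrivialCat C) (hwp : WellPointed C) {V : C}
    (n : ℕ) (v : Fin n → (⊤_ C ⟶ V)) (hv : Function.Injective v) :
    Mono (copowDesc n v) := by
  constructor
  intro W f g h
  refine hwp _ _ fun π => ?_
  obtain ⟨i, hi⟩ := copowPt_surjective hnt hwp n (π ≫ f)
  obtain ⟨j, hj⟩ := copowPt_surjective hnt hwp n (π ≫ g)
  have hij : v i = v j := by
    rw [← copowPt_desc n v i, ← copowPt_desc n v j, ← hi, ← hj,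
      Category.assoc, Category.assoc, h]
  rw [hi, hj, hv hij]

lemma copowDesc_isIso (hnt : NonTrivialCat C) (hwp : WellPointed C)
    (hat : ∀ X : C, AtomicSubobjects X) {V : C}
    (n : ℕ) (v : Fin n → (⊤_ C ⟶ V)) (hinj : Function.Injective v)
    (hsurj : ∀ p : ⊤_ C ⟶ V, ∃ i, p = v i) :
    IsIso (copowDesc n v) := by
  haveI := copowDesc_mono hnt hwp n v hinj
  rw [Subobject.isIso_iff_mk_eq_top]
  apply eq_top_of_vs_univ hnt hwp hat
  rw [Set.eq_univ_iff_forall]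
  intro p
  obtain ⟨i, hi⟩ := hsurj p
  show (Subobject.mk (copowDesc n v)).Factors p
  rw [Subobject.mk_factors_iff]
  refine ⟨copowPt n i, ?_⟩
  rw [MonoOver.mk_arrow]; erw [copowPt_desc, hi]

end Copow

section Decid

instance diag_isSplitMono {X : C} : IsSplitMono (diag X) :=
  IsSplitMono.mk' ⟨prod.fst, prod.lift_fst _ _⟩

lemma point_prod_decomp {X Y : C} (z : ⊤_ C ⟶ X ⨯ Y) :
    z = prod.lift (z ≫ prod.fst) (z ≫ prod.snd) := by
  apply Limits.prod.hom_ext <;> simp only [prod.lift_fst, prod.lift_snd]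

lemma copow_decidable (hnt : NonTrivialCat C) (hwp : WellPointed C)
    (hat : ∀ X : C, AtomicSubobjects X) (n : ℕ) :
    DecidableObj (copow (C := C) n) := by
  classical
  set W := copow (C := C) n with hW
  set D := {q : Fin n × Fin n // q.1 ≠ q.2} with hD
  set m := Fintype.card D with hm
  set eD : Fin m ≃ D := (Fintype.equivFin D).symm with heD
  set v : Fin m → (⊤_ C ⟶ W ⨯ W) :=
    fun i => prod.lift (copowPt n (eD i).1.1) (copowPt n (eD i).1.2) with hv
  have hvinj : Function.Injective v := by
    intro i j hij
    have h1 : copowPt (C := C) n (eD i).1.1 = copowPt n (eD j).1.1 := by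
      have := congrArg (fun t => t ≫ prod.fst) hij
      simpa [hv, prod.lift_fst] using this
    have h2 : copowPt (C := C) n (eD i).1.2 = copowPt n (eD j).1.2 := by
      have := congrArg (fun t => t ≫ prod.snd) hij
      simpa [hv, prod.lift_snd] using this
    have : eD i = eD j := by
      apply Subtype.ext
      exact Prod.ext (copowPt_injective hnt n _ _ h1) (copowPt_injective hnt n _ _ h2)
    exact eD.injective this
  haveI := copowDesc_mono hnt hwp m v hvinj
  refine ⟨copow (C := C) m, copowDesc m v, ?_⟩
  apply isColimit_cofan_of_points hnt hwp hat
  · -- no common point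
    intro a b hab
    obtain ⟨i, hi⟩ := copowPt_surjective hnt hwp m b
    rw [hi, copowPt_desc] at hab
    have h1 : a = copowPt (C := C) n (eD i).1.1 := by
      have := congrArg (fun t => t ≫ prod.fst) hab
      simpa [hv, diag, prod.lift_fst] using this
    have h2 : a = copowPt (C := C) n (eD i).1.2 := by
      have := congrArg (fun t => t ≫ prod.snd) hab
      simpa [hv, diag, prod.lift_snd] using this
    exact (eD i).2 (copowPt_injective hnt n _ _ (h1 ▸ h2))
  · -- cover
    intro z
    obtain ⟨i, hi⟩ := copowPt_surjective hnt hwp n (z ≫ prod.fst)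
    obtain ⟨j, hj⟩ := copowPt_surjective hnt hwp n (z ≫ prod.snd)
    by_cases hij : i = j
    · left
      refine ⟨z ≫ prod.fst, ?_⟩
      rw [point_prod_decomp z, hj, hi, hij]
      apply Limits.prod.hom_ext <;> simp [diag, hij, prod.lift_fst, prod.lift_snd]
    · right
      refine ⟨copowPt m (eD.symm ⟨(i, j), hij⟩), ?_⟩
      rw [copowPt_desc, hv]
      rw [point_prod_decomp z, hi, hj]
      simp

lemma decidable_copow_iso (hnt : NonTrivialCat C) (hwp : WellPointed C)
    (hat : ∀ X : C, AtomicSubobjects X) {X : C} [Fintype (⊤_ C ⟶ X)] :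
    ∃ (e : Fin (Fintype.card (⊤_ C ⟶ X)) ≃ (⊤_ C ⟶ X)),
      IsIso (copowDesc (Fintype.card (⊤_ C ⟶ X)) (fun i => e i)) := by
  classical
  set e := (Fintype.equivFin (⊤_ C ⟶ X)).symm
  refine ⟨e, copowDesc_isIso hnt hwp hat _ _ (fun i j h => e.injective h)
    (fun p => ⟨e.symm p, (e.apply_symm_apply p).symm⟩)⟩

end Decid

section Filt

lemma point_lift (hnt : NonTrivialCat C) (hwp : WellPointed C)
    [HasImages C] [StableImages C] {X' X : C} (e : X' ⟶ X) [IsRegularEpi e]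
    (p : ⊤_ C ⟶ X) : ∃ p' : ⊤_ C ⟶ X', p' ≫ e = p := by
  have sq : CommSq (factorThruImage e) e (image.ι e) (𝟙 X) :=
    ⟨by rw [image.fac, Category.comp_id]⟩
  haveI : IsSplitEpi (image.ι e) := IsSplitEpi.mk' ⟨sq.lift, sq.fac_right⟩
  haveI : IsIso (image.ι e) := isIso_of_mono_of_isSplitEpi _
  have him : imageSubobject e = ⊤ := Subobject.mk_eq_top_of_isIso (image.ι e)
  have h2 : imageSubobject (pullback.snd e p) = ⊤ := by
    rw [← StableImages.image_pullback e p, him, Subobject.pullback_top]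
  have hP : IsInitial (pullback e p) → False := by
    intro hini
    have hle : imageSubobject (pullback.snd e p) ≤ (⊥ : Subobject (⊤_ C)) := by
      rw [Subobject.bot_eq_initial_to]
      exact imageSubobject_le_mk (initial.to (⊤_ C)) _ (hini.to (⊥_ C))
        (hom_terminal_ext _ _)
    rw [h2] at hle
    exact bot_ne_top_terminal hnt (le_antisymm bot_le hle)
  obtain ⟨π⟩ := exists_point hnt hwp hP
  refine ⟨π ≫ pullback.fst e p, ?_⟩
  rw [Category.assoc, pullback.condition, ← Category.assoc,
    hom_terminal_ext (π ≫ pullback.snd e p) (𝟙 _), Category.id_comp]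

lemma vs_compl (hnt : NonTrivialCat C) (hwp : WellPointed C)
    {X : C} {S T m : Subobject X} (hglb : IsGLB {S, T} m) (hbot : IsBotIn m)
    (hlub : IsLUB {S, T} ⊤) : Vs T = (Vs S)ᶜ := by
  have h1 : Vs S ∩ Vs T = ∅ := by
    rw [← vs_isGLB hglb, (isBotIn_iff m).mp hbot, vs_bot hnt]
  have h2 : Vs S ∪ Vs T = Set.univ := by
    rw [← vs_isLUB hnt hwp hlub, vs_top]
  ext x
  constructor
  · intro hx hS
    exact absurd (Set.mem_inter hS hx) (h1 ▸ id)
  · intro hx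
    rcases (Set.eq_univ_iff_forall.mp h2 x) with h | h
    · exact absurd h hx
    · exact h

lemma isComplementedSub_top {X : C} : IsComplementedSub (⊤ : Subobject X) := by
  refine ⟨⊥, ⊥, ⟨fun U hU => bot_le, fun x hx => hx (Set.mem_insert_of_mem _ rfl)⟩,
    fun S => bot_le, ⟨fun U hU => le_top, fun x hx => hx (Set.mem_insert _ _)⟩⟩

lemma isComplementedSub_bot {X : C} : IsComplementedSub (⊥ : Subobject X) := by
  refine ⟨⊤, ⊥, ⟨fun U hU => bot_le, fun x hx => hx (Set.mem_insert _ _)⟩,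
    fun S => bot_le, ⟨fun U hU => le_top, fun x hx => hx (Set.mem_insert_of_mem _ rfl)⟩⟩

lemma isComplementedSub_inf (hnt : NonTrivialCat C) (hwp : WellPointed C)
    (hat : ∀ X : C, AtomicSubobjects X) {X : C} {S T m : Subobject X}
    (hS : IsComplementedSub S) (hT : IsComplementedSub T) (hm : IsGLB {S, T} m) :
    IsComplementedSub m := by
  obtain ⟨S', mS, hglbS, hbotS, hlubS⟩ := hS
  obtain ⟨T', mT, hglbT, hbotT, hlubT⟩ := hT
  have hcS : Vs S' = (Vs S)ᶜ := vs_compl hnt hwp hglbS hbotS hlubS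
  have hcT : Vs T' = (Vs T)ᶜ := vs_compl hnt hwp hglbT hbotT hlubT
  obtain ⟨U, hU⟩ := CoherentJoins.exists_sup S' T'
  have hVm : Vs m = Vs S ∩ Vs T := vs_isGLB hm
  have hVU : Vs U = (Vs S)ᶜ ∪ (Vs T)ᶜ := by
    rw [vs_isLUB hnt hwp hU, hcS, hcT]
  refine ⟨U, m ⊓ U, isGLB_pair, ?_, ?_⟩
  · rw [isBotIn_iff]
    refine le_bot_iff.mp ?_
    rw [le_iff_vs_subset hnt hwp hat, vs_bot hnt, vs_isGLB (isGLB_pair (a := m) (b := U)),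
      hVm, hVU]
    rintro x ⟨⟨h1, h2⟩, (h3 | h3)⟩
    · exact h3 h1
    · exact h3 h2
  · refine ⟨fun x hx => le_top, fun V hV => ?_⟩
    rw [le_iff_vs_subset hnt hwp hat, vs_top]
    intro x _
    by_cases hx : x ∈ Vs S ∩ Vs T
    · exact vs_mono (hV (Set.mem_insert _ _)) (hVm ▸ hx)
    · have : x ∈ Vs U := by
        rw [hVU]
        rw [Set.mem_inter_iff] at hx
        rcases not_and_or.mp hx with h | h
        · exact Or.inl h
        · exact Or.inr h
      exact vs_mono (hV (Set.mem_insert_of_mem _ rfl)) this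

lemma comp_pointmap {X X' : C} (e : X' ⟶ X) (p : ⊤_ C ⟶ X) (x' : ⊤_ C ⟶ X') :
    x' ≫ e ≫ prod.lift (terminal.from X ≫ p) (𝟙 X) = prod.lift p (x' ≫ e) := by
  rw [← Category.assoc, prod.comp_lift, Category.comp_id, ← Category.assoc,
    hom_terminal_ext ((x' ≫ e) ≫ terminal.from X) (𝟙 _), Category.id_comp]

lemma factors_Tp_iff (hnt : NonTrivialCat C) {X X' : C}
    (e : X' ⟶ X) (p : ⊤_ C ⟶ X) (x' : ⊤_ C ⟶ X') :
    ((Subobject.pullback (e ≫ prod.lift (terminal.from X ≫ p) (𝟙 X))).obj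
      (Subobject.mk (diag X))).Factors x' ↔ x' ≫ e = p := by
  rw [pullback_factors_iff, comp_pointmap, Subobject.mk_factors_iff]
  constructor
  · rintro ⟨u, hu⟩
    rw [MonoOver.mk_arrow] at hu
    have h1 : u = p := by
      have := congrArg (fun t => t ≫ prod.fst) hu
      simp only [diag] at this; erw [Category.assoc, prod.lift_fst, Category.comp_id] at this
      simpa [prod.lift_fst] using this
    have h2 : u = x' ≫ e := by
      have := congrArg (fun t => t ≫ prod.snd) hu
      simp only [diag] at this; erw [Category.assoc, prod.lift_snd, Category.comp_id] at this
      simpa [prod.lift_snd] using this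
    rw [← h2, h1]
  · intro h
    refine ⟨p, ?_⟩
    rw [MonoOver.mk_arrow]
    apply Limits.prod.hom_ext <;> simp [diag, h]

lemma factors_Cp_iff (hnt : NonTrivialCat C) (hwp : WellPointed C) {X X' Y : C}
    {g : Y ⟶ X ⨯ X} [Mono g] (c : IsColimit (BinaryCofan.mk (diag X) g))
    (e : X' ⟶ X) (p : ⊤_ C ⟶ X) (x' : ⊤_ C ⟶ X') :
    ((Subobject.pullback (e ≫ prod.lift (terminal.from X ≫ p) (𝟙 X))).obj
      (Subobject.mk g)).Factors x' ↔ ¬ (x' ≫ e = p) := by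
  rw [pullback_factors_iff, comp_pointmap, Subobject.mk_factors_iff]
  constructor
  · rintro ⟨u, hu⟩ heq
    rw [MonoOver.mk_arrow] at hu
    have hd : p ≫ diag X = prod.lift p (x' ≫ e) := by
      apply Limits.prod.hom_ext <;> simp [diag, heq]
    exact no_common_point hnt c p u (hd.trans hu.symm)
  · intro hne
    rcases point_in_cofan hnt hwp c (prod.lift p (x' ≫ e)) with ⟨a, ha⟩ | ⟨b, hb⟩
    · exfalso
      have h1 : a = p := by
        have := congrArg (fun t => t ≫ prod.fst) ha
        simpa [diag, prod.lift_fst] using this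
      have h2 : a = x' ≫ e := by
        have := congrArg (fun t => t ≫ prod.snd) ha
        simpa [diag, prod.lift_snd] using this
      exact hne (h2 ▸ h1)
    · refine ⟨b, ?_⟩
      rw [MonoOver.mk_arrow]
      exact hb

lemma finite_points_of_decidable [HasImages C] [StableImages C]
    (hnt : NonTrivialCat C) (hwp : WellPointed C)
    (hat : ∀ X : C, AtomicSubobjects X) (hf : Filtral C) {X : C}
    (hX : DecidableObj X) : Finite (⊤_ C ⟶ X) := by
  classical
  by_contra hfin
  rw [not_finite_iff_infinite] at hfin
  obtain ⟨Y, g, ⟨c⟩⟩ := hX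
  haveI : Mono g := Mono.of_binaryCoproductDisjoint_right (diag X) c
  obtain ⟨X', e, hre, hfo⟩ := hf X
  haveI : IsRegularEpi e := ⟨hre⟩
  obtain ⟨φ⟩ := hfo
  set Cp : (⊤_ C ⟶ X) → Subobject X' := fun p =>
    (Subobject.pullback (e ≫ prod.lift (terminal.from X ≫ p) (𝟙 X))).obj
      (Subobject.mk g) with hCp
  set mJ : Finset (⊤_ C ⟶ X) → Subobject X' := fun J => J.inf Cp with hmJdef
  have hmJ_ne : ∀ J, mJ J ≠ ⊥ := by
    intro J
    obtain ⟨q, hq⟩ := Infinite.exists_notMem_finset J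
    obtain ⟨x', hx'⟩ := point_lift hnt hwp e q
    have hfac : (mJ J).Factors x' := by
      rw [hmJdef, Subobject.finset_inf_factors]
      intro j hj
      rw [hCp, factors_Cp_iff hnt hwp c, hx']
      intro h
      exact hq (h ▸ hj)
    intro hbot
    rw [hbot] at hfac
    have : x' ∈ Vs (⊥ : Subobject X') := hfac
    rw [vs_bot hnt] at this
    exact this
  set Ball : CenterFilter X' :=
    ⟨{S | IsComplementedSub S}, fun S h => h, ⟨⊤, isComplementedSub_top⟩,
      fun S hS T hT m hm => isComplementedSub_inf hnt hwp hat hS hT hm,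
      fun S hS T hT _ => hT⟩ with hBall
  have hBall_least : ∀ F : CenterFilter X', Ball ≤ F := by
    intro F
    show F.carrier ⊆ Ball.carrier
    exact fun S hS => F.mem_complemented S hS
  have hphi_bot : φ ⊥ = Ball := by
    refine le_antisymm ?_ (hBall_least _)
    have : φ (⊥ : Subobject X') ≤ φ (φ.symm Ball) := φ.monotone bot_le
    rwa [φ.apply_symm_apply] at this
  set Gc : Set (Subobject X') := {S | ∃ J : Finset (⊤_ C ⟶ X), S ∈ (φ (mJ J)).carrier}
    with hGc
  have hmono : ∀ {J J' : Finset (⊤_ C ⟶ X)}, J ⊆ J' →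
      (φ (mJ J)).carrier ⊆ (φ (mJ J')).carrier := by
    intro J J' hJJ
    exact (φ.monotone (Finset.inf_mono hJJ) : φ (mJ J') ≤ φ (mJ J))
  set G : CenterFilter X' :=
    ⟨Gc, by
        rintro S ⟨J, hJ⟩
        exact (φ (mJ J)).mem_complemented S hJ,
      by
        obtain ⟨S, hS⟩ := (φ (mJ ∅)).nonempty
        exact ⟨S, ⟨∅, hS⟩⟩,
      by
        rintro S ⟨J1, h1⟩ T ⟨J2, h2⟩ m hm
        exact ⟨J1 ∪ J2, (φ (mJ (J1 ∪ J2))).inf_mem S (hmono Finset.subset_union_left h1)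
          T (hmono Finset.subset_union_right h2) m hm⟩,
      by
        rintro S ⟨J, hJ⟩ T hT hST
        exact ⟨J, (φ (mJ J)).mem_of_le S hJ T hT hST⟩⟩ with hG
  set m0 : Subobject X' := φ.symm G with hm0
  have hm0_le : ∀ p : ⊤_ C ⟶ X, m0 ≤ Cp p := by
    intro p
    rw [hm0, ← φ.le_iff_le, φ.apply_symm_apply]
    show (φ (Cp p)).carrier ⊆ G.carrier
    intro S hS
    refine ⟨{p}, ?_⟩
    rwa [show mJ {p} = Cp p from Finset.inf_singleton]
  have hm0_ne : m0 ≠ ⊥ := by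
    intro h
    have hGB : G = Ball := by
      rw [← hphi_bot, ← h, hm0, φ.apply_symm_apply]
    have hbotG : (⊥ : Subobject X') ∈ G.carrier := by
      rw [hGB]
      exact isComplementedSub_bot
    obtain ⟨J, hJ⟩ := hbotG
    have heq : φ (mJ J) = Ball := by
      apply CenterFilter.ext'
      apply Set.Subset.antisymm
      · exact fun S hS => (φ (mJ J)).mem_complemented S hS
      · intro S hS
        exact (φ (mJ J)).mem_of_le ⊥ hJ S hS bot_le
    exact hmJ_ne J (φ.injective (by rw [heq, hphi_bot]))
  obtain ⟨x'', hx''⟩ := exists_point_of_ne_bot hnt hwp hm0_ne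
  have : ∀ p : ⊤_ C ⟶ X, ¬ (x'' ≫ e = p) := by
    intro p
    have hxCp : (Cp p).Factors x'' := vs_mono (hm0_le p) hx''
    rw [hCp] at hxCp
    exact (factors_Cp_iff hnt hwp c e p x'').mp hxCp
  exact this (x'' ≫ e) rfl

end Filt

section Main

variable [HasImages C] [StableImages C]

noncomputable def ptFunctor (hnt : NonTrivialCat C) (hwp : WellPointed C)
    (hat : ∀ X : C, AtomicSubobjects X) (hf : Filtral C) :
    ObjectProperty.FullSubcategory (fun X : C => DecidableObj X) ⥤ FintypeCat.{v} where
  obj X := @FintypeCat.of (⊤_ C ⟶ X.obj)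
    (finite_points_of_decidable hnt hwp hat hf X.property)
  map {X Y} f := FintypeCat.homMk fun p => p ≫ f.hom
  map_id X := by ext p; exact Category.comp_id p
  map_comp {X Y Z} f g := by ext p; exact (Category.assoc p f.hom g.hom).symm

lemma ptFunctor_faithful (hnt : NonTrivialCat C) (hwp : WellPointed C)
    (hat : ∀ X : C, AtomicSubobjects X) (hf : Filtral C) :
    (ptFunctor hnt hwp hat hf).Faithful := by
  constructor
  intro X Y f g h
  exact ObjectProperty.hom_ext _ (hwp _ _ fun p => ConcreteCategory.congr_hom h p)

lemma ptFunctor_full (hnt : NonTrivialCat C) (hwp : WellPointed C)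
    (hat : ∀ X : C, AtomicSubobjects X) (hf : Filtral C) :
    (ptFunctor hnt hwp hat hf).Full := by
  constructor
  intro X Y φ
  haveI : Finite (⊤_ C ⟶ X.obj) := finite_points_of_decidable hnt hwp hat hf X.property
  haveI : Fintype (⊤_ C ⟶ X.obj) := Fintype.ofFinite _
  obtain ⟨eX, hiso⟩ := decidable_copow_iso hnt hwp hat (X := X.obj)
  haveI : IsIso (copowDesc (Fintype.card (⊤_ C ⟶ X.obj)) (fun i => eX i)) := hiso
  refine ⟨ObjectProperty.homMk (inv (copowDesc (Fintype.card (⊤_ C ⟶ X.obj)) (fun i => eX i)) ≫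
    copowDesc (Fintype.card (⊤_ C ⟶ X.obj))
      (fun i => (φ (eX i) : ⊤_ C ⟶ Y.obj)) : X.obj ⟶ Y.obj), ?_⟩
  ext p
  change ⊤_ C ⟶ X.obj at p
  have h1 : p ≫ inv (copowDesc (Fintype.card (⊤_ C ⟶ X.obj)) (fun i => eX i)) =
      copowPt _ (eX.symm p) := by
    rw [IsIso.comp_inv_eq, copowPt_desc]
    exact (eX.apply_symm_apply p).symm
  show p ≫ (inv (copowDesc (Fintype.card (⊤_ C ⟶ X.obj)) (fun i => eX i)) ≫
    copowDesc (Fintype.card (⊤_ C ⟶ X.obj)) (fun i => (φ (eX i) : ⊤_ C ⟶ Y.obj))) = φ p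
  rw [← Category.assoc, h1]; erw [copowPt_desc, eX.apply_symm_apply]

lemma ptFunctor_essSurj (hnt : NonTrivialCat C) (hwp : WellPointed C)
    (hat : ∀ X : C, AtomicSubobjects X) (hf : Filtral C) :
    (ptFunctor hnt hwp hat hf).EssSurj := by
  constructor
  intro T
  letI : Fintype T := Fintype.ofFinite T
  refine ⟨⟨copow (Fintype.card T), copow_decidable hnt hwp hat _⟩, ⟨?_⟩⟩
  have e1 : (⊤_ C ⟶ copow (C := C) (Fintype.card T)) ≃ Fin (Fintype.card T) := by
    refine (Equiv.ofBijective (copowPt (Fintype.card T)) ⟨?_, ?_⟩).symm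
    · exact fun i j h => copowPt_injective hnt _ i j h
    · intro z
      obtain ⟨i, hi⟩ := copowPt_surjective hnt hwp _ z
      exact ⟨i, hi.symm⟩
  exact FintypeCat.equivEquivIso (e1.trans (Fintype.equivFin T).symm)

end Main

end Aux

/-- `Spec` restricts to an equivalence between the decidable objects of `𝒳` and the
category of finite sets. -/
theorem decidable_equiv_finiteSets
    [WellPowered.{v} C] [HasFiniteLimits C] [HasImages C] [StableImages C] [CoherentJoins C]
    [HasFiniteCoproducts C] [BinaryCoproductsDisjoint C]
    (hnt : NonTrivialCat C) (hwp : WellPointed C) (hf : Filtral C)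
    (hat : ∀ X : C, AtomicSubobjects X) :
    ∃ E : ObjectProperty.FullSubcategory (fun X : C => DecidableObj X) ≌ FintypeCat.{v},
      Nonempty ((E.functor ⋙ FintypeCat.incl) ≅
        ObjectProperty.ι _ ⋙ coyoneda.obj (op (⊤_ C))) := by
  let F := ptFunctor hnt hwp hat hf
  haveI : F.Faithful := ptFunctor_faithful hnt hwp hat hf
  haveI : F.Full := ptFunctor_full hnt hwp hat hf
  haveI : F.EssSurj := ptFunctor_essSurj hnt hwp hat hf
  haveI : F.IsEquivalence := ⟨inferInstance, inferInstance, inferInstance⟩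
  refine ⟨F.asEquivalence, ⟨NatIso.ofComponents (fun X => Iso.refl _) ?_⟩⟩
  intro X Y f
  simp only [Iso.refl_hom, Category.comp_id, Category.id_comp]
  rfl
end Paper
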